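/- arXiv:1804.00317 — 5 statements merged into one kernel-verified Lean document; each statement's English description precedes it below -/
import Mathlib

section
/- Let q, J be natural numbers, let L : ℤ × (ℝ^q)^{J+1} → ℝ be C¹ in its (ℝ^q)^{J+1}-arguments, and let u, w : ℤ → ℝ^q be sequences. Then for every n ∈ ℤ the pointwise identity Σ_{j=0}^{J} Σ_{α=1}^{q} w^α(n+j)·(∂L/∂u^α_j)(n, u(n),…,u(n+J)) = Σ_{α=1}^{q} w^α(n)·E_α(L)[u](n) + A[u,w](n+1) − A[u,w](n) holds, where E_α(L)[u] is the Euler–Lagrange expression and A[u,w] is the boundary term defined below. -/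
/-- Partial derivative of `L n` with respect to the `α`-th component of its `j`-th
`ℝ^q`-block. -/
noncomputable def pderivL (q J : ℕ) (L : ℤ → (Fin (J+1) → Fin q → ℝ) → ℝ)
    (n : ℤ) (z : Fin (J+1) → Fin q → ℝ) (j : Fin (J+1)) (α : Fin q) : ℝ :=
  fderiv ℝ (L n) z (Pi.single j (Pi.single α 1))

/-- The window `(u(n), u(n+1), …, u(n+J))` of a sequence `u : ℤ → ℝ^q`. -/
def windowL (q J : ℕ) (u : ℤ → Fin q → ℝ) (n : ℤ) : Fin (J+1) → Fin q → ℝ :=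
  fun j α => u (n + (j : ℕ)) α

/-- The Euler–Lagrange expression `E_α(L)[u](n) = Σ_j (∂L/∂u^α_j)(n-j, u(n-j),…,u(n-j+J))`. -/
noncomputable def ELexpr (q J : ℕ) (L : ℤ → (Fin (J+1) → Fin q → ℝ) → ℝ)
    (u : ℤ → Fin q → ℝ) (α : Fin q) (n : ℤ) : ℝ :=
  ∑ j : Fin (J+1), pderivL q J L (n - (j : ℕ)) (windowL q J u (n - (j : ℕ))) j α

/-- The boundary term
`A[u,w](n) = Σ_{j=1}^{J} Σ_{l=0}^{j-1} Σ_α w^α(n+l)·(∂L/∂u^α_j)(n+l-j, u(n+l-j),…)`. -/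
noncomputable def bdryTerm (q J : ℕ) (L : ℤ → (Fin (J+1) → Fin q → ℝ) → ℝ)
    (u w : ℤ → Fin q → ℝ) (n : ℤ) : ℝ :=
  ∑ j : Fin (J+1), ∑ l ∈ Finset.range (j : ℕ), ∑ α : Fin q,
    w (n + (l : ℕ)) α *
      pderivL q J L (n + (l : ℕ) - (j : ℕ)) (windowL q J u (n + (l : ℕ) - (j : ℕ))) j α

/-- Pointwise summation-by-parts identity: the variation of the Lagrangian splits into the
Euler–Lagrange term plus a total difference of the boundary term. -/
theorem summation_by_parts_identity (q J : ℕ)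
    (L : ℤ → (Fin (J+1) → Fin q → ℝ) → ℝ)
    (hL : ∀ n, ContDiff ℝ 1 (L n))
    (u w : ℤ → Fin q → ℝ) (n : ℤ) :
    ∑ j : Fin (J+1), ∑ α : Fin q,
        w (n + (j : ℕ)) α * pderivL q J L n (windowL q J u n) j α
      = (∑ α : Fin q, w n α * ELexpr q J L u α n)
        + bdryTerm q J L u w (n + 1) - bdryTerm q J L u w n := by
  unfold bdryTerm ELexpr
  simp only [Finset.mul_sum]
  rw [Finset.sum_comm (γ := Fin q)]
  rw [← Finset.sum_add_distrib, ← Finset.sum_sub_distrib]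
  refine Finset.sum_congr rfl fun j _ => ?_
  set g : ℕ → ℝ := fun l =>
    ∑ α : Fin q, w (n + (l : ℕ)) α *
      pderivL q J L (n + (l : ℕ) - (j : ℕ)) (windowL q J u (n + (l : ℕ) - (j : ℕ))) j α with hg
  have h1 : (∑ l ∈ Finset.range (j : ℕ), ∑ α : Fin q,
      w (n + 1 + (l : ℕ)) α *
        pderivL q J L (n + 1 + (l : ℕ) - (j : ℕ))
          (windowL q J u (n + 1 + (l : ℕ) - (j : ℕ))) j α)
      = ∑ l ∈ Finset.range (j : ℕ), g (l + 1) := by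
    refine Finset.sum_congr rfl fun l _ => ?_
    simp only [hg]
    have : n + 1 + (l : ℕ) = n + ((l + 1 : ℕ) : ℤ) := by push_cast; ring
    rw [this]
  have h0 : (∑ l ∈ Finset.range (j : ℕ), ∑ α : Fin q,
      w (n + (l : ℕ)) α *
        pderivL q J L (n + (l : ℕ) - (j : ℕ))
          (windowL q J u (n + (l : ℕ) - (j : ℕ))) j α)
      = ∑ l ∈ Finset.range (j : ℕ), g l := rfl
  rw [h1, h0]
  have htel : (∑ l ∈ Finset.range (j : ℕ), g (l + 1)) - ∑ l ∈ Finset.range (j : ℕ), g l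
      = g (j : ℕ) - g 0 := by
    rw [← Finset.sum_sub_distrib, Finset.sum_range_sub]
  have hgj : g (j : ℕ) = ∑ α : Fin q,
      w (n + (j : ℕ)) α * pderivL q J L n (windowL q J u n) j α := by
    simp only [hg]
    have : n + ((j : ℕ) : ℤ) - ((j : ℕ) : ℤ) = n := by ring
    rw [this]
  have hg0 : g 0 = ∑ α : Fin q,
      w n α * pderivL q J L (n - (j : ℕ)) (windowL q J u (n - (j : ℕ))) j α := by
    simp only [hg]
    norm_num
  have : ∑ α : Fin q, w (n + (j : ℕ)) α * pderivL q J L n (windowL q J u n) j α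
      = g 0 + ((∑ l ∈ Finset.range (j : ℕ), g (l + 1)) - ∑ l ∈ Finset.range (j : ℕ), g l) := by
    rw [htel, hgj]; ring
  rw [this, hg0]
  ring
end

section
/- Let q, J be natural numbers, let L : ℤ × (ℝ^q)^{J+1} → ℝ be C¹ in its (ℝ^q)^{J+1}-arguments, and let u : ℤ → ℝ^q. If for every finitely supported sequence w : ℤ → ℝ^q the total variation vanishes, i.e. Σ_{n∈ℤ} (d/dε)|_{ε=0} L(n, u(n)+εw(n), …, u(n+J)+εw(n+J)) = 0 (the sum has only finitely many nonzero terms), then u satisfies the Euler–Lagrange system: E_α(L)[u](n) = 0 for every n ∈ ℤ and every α = 1,…,q. -/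
lemma deriv_aux {J q : ℕ} (f : (Fin (J+1) → Fin q → ℝ) → ℝ) (hf : ContDiff ℝ 1 f)
    (z v : Fin (J+1) → Fin q → ℝ) :
    deriv (fun ε : ℝ => f (fun j α => z j α + ε * v j α)) 0 = fderiv ℝ f z v := by
  have hg : HasDerivAt (fun ε : ℝ => z + ε • v) v 0 := by
    simpa using ((hasDerivAt_id (0:ℝ)).smul_const v).const_add z
  have hf' : HasFDerivAt f (fderiv ℝ f z) z := (hf.differentiable one_ne_zero z).hasFDerivAt
  have h0 : z + (0:ℝ) • v = z := by simp
  rw [← h0] at hf'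
  have h := hf'.comp_hasDerivAt 0 hg
  have hd := h.deriv
  rw [h0] at hd
  simp only [Function.comp_def] at hd
  have heq : ∀ ε : ℝ, (fun j α => z j α + ε * v j α) = z + ε • v := by
    intro ε; funext j α; simp
  simp only [heq]
  exact hd

/-- If the total variation vanishes for every finitely supported variation `w`, then `u`
satisfies the Euler–Lagrange system. -/
theorem extremal_satisfies_euler_lagrange (q J : ℕ)
    (L : ℤ → (Fin (J+1) → Fin q → ℝ) → ℝ)
    (hL : ∀ n, ContDiff ℝ 1 (L n))
    (u : ℤ → Fin q → ℝ)
    (hvar : ∀ w : ℤ → Fin q → ℝ, (Function.support w).Finite →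
      ∑ᶠ n : ℤ, deriv
        (fun ε : ℝ => L n (fun j α => u (n + (j : ℕ)) α + ε * w (n + (j : ℕ)) α)) 0 = 0) :
    ∀ (n : ℤ) (α : Fin q), ELexpr q J L u α n = 0 := by
  intro n₀ α
  classical
  set w : ℤ → Fin q → ℝ := fun m => if m = n₀ then Pi.single α 1 else 0 with hw
  have hsupp : (Function.support w).Finite := by
    apply Set.Finite.subset (Set.finite_singleton n₀)
    intro m hm
    by_contra hne
    simp only [Set.mem_singleton_iff] at hne
    exact hm (by simp [hw, hne])
  have hv := hvar w hsupp
  set F : ℤ → ℝ := fun n =>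
    deriv (fun ε : ℝ => L n (fun j α => u (n + (j : ℕ)) α + ε * w (n + (j : ℕ)) α)) 0 with hF
  have hFeq : ∀ n, F n = fderiv ℝ (L n) (windowL q J u n) (fun (j : Fin (J+1)) (β : Fin q) => w (n + (j : ℕ)) β) := by
    intro n
    exact deriv_aux (L n) (hL n) (windowL q J u n) (fun (j : Fin (J+1)) (β : Fin q) => w (n + (j : ℕ)) β)
  set T : Finset ℤ := Finset.image (fun j : Fin (J+1) => n₀ - (j : ℕ)) Finset.univ with hT
  have hFsupp : Function.support F ⊆ ↑T := by
    intro n hn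
    rw [Function.mem_support] at hn
    by_contra hnT
    apply hn
    rw [hFeq]
    have hz : (fun (j : Fin (J+1)) (β : Fin q) => w (n + (j : ℕ)) β) = (0 : Fin (J+1) → Fin q → ℝ) := by
      funext j β
      have : n + (j : ℕ) ≠ n₀ := by
        intro h
        apply hnT
        simp only [hT, Finset.coe_image, Finset.coe_univ, Set.image_univ, Set.mem_range]
        exact ⟨j, by omega⟩
      simp [hw, this]
    rw [hz, map_zero]
  have hsum : ∑ᶠ n : ℤ, F n = ∑ n ∈ T, F n :=
    finsum_eq_sum_of_support_subset F hFsupp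
  have hinj : ∀ x ∈ (Finset.univ : Finset (Fin (J+1))), ∀ y ∈ (Finset.univ : Finset (Fin (J+1))),
      n₀ - ((x : ℕ) : ℤ) = n₀ - ((y : ℕ) : ℤ) → x = y := by
    intro x _ y _ h
    have h' : (x:ℕ) = (y:ℕ) := by omega
    exact Fin.ext (h')
  have himg : ∑ n ∈ T, F n = ∑ j : Fin (J+1), F (n₀ - (j : ℕ)) := by
    rw [hT, Finset.sum_image hinj]
  have hterm : ∀ j₀ : Fin (J+1), F (n₀ - (j₀ : ℕ)) =
      pderivL q J L (n₀ - (j₀ : ℕ)) (windowL q J u (n₀ - (j₀ : ℕ))) j₀ α := by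
    intro j₀
    rw [hFeq]
    have hdir : (fun (j : Fin (J+1)) (β : Fin q) => w (n₀ - (j₀ : ℕ) + (j : ℕ)) β)
        = Pi.single j₀ (Pi.single α 1) := by
      funext j β
      by_cases h : j = j₀
      · subst h
        have : n₀ - ((j:ℕ):ℤ) + (j:ℕ) = n₀ := by ring
        simp [hw, this]
      · have hne : ((j:ℕ):ℤ) ≠ ((j₀:ℕ):ℤ) := by
          exact fun hh => h (Fin.ext (Nat.cast_injective hh))
        have : n₀ - (j₀ : ℕ) + (j : ℕ) ≠ n₀ := by omega
        simp [hw, this, Pi.single_apply, h]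
    rw [hdir]
    rfl
  unfold ELexpr
  calc ∑ j : Fin (J+1), pderivL q J L (n₀ - (j : ℕ)) (windowL q J u (n₀ - (j : ℕ))) j α
      = ∑ j : Fin (J+1), F (n₀ - (j : ℕ)) := by
        refine Finset.sum_congr rfl fun j _ => (hterm j).symm
    _ = ∑ n ∈ T, F n := himg.symm
    _ = ∑ᶠ n : ℤ, F n := hsum.symm
    _ = 0 := hv
end

section
/- (Difference Noether's Theorem.) Let q, J be natural numbers, let L : ℤ × (ℝ^q)^{J+1} → ℝ be C¹ in its (ℝ^q)^{J+1}-arguments, let u : ℤ → ℝ^q, let φ : ℤ × ℝ^q → ℝ^q, and write φ_u(n) = φ(n, u(n)). Suppose there is a sequence B : ℤ → ℝ such that for all n ∈ ℤ, Σ_{j=0}^{J} Σ_{α=1}^{q} φ_u^α(n+j)·(∂L/∂u^α_j)(n, u(n),…,u(n+J)) = B(n+1) − B(n) (i.e. φ is a variational symmetry characteristic along u). If u solves the Euler–Lagrange system E_α(L)[u](n) = 0 for all n and α, then (A[u,φ_u] − B)(n+1) − (A[u,φ_u] − B)(n) = 0 for all n; equivalently there is a constant c with A[u,φ_u](n) −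 B(n) = c for all n (a first integral). -/
/-- Difference Noether's Theorem: if `φ` is the characteristic of a variational symmetry of `L`
along `u` (with divergence term `B`), and `u` solves the Euler–Lagrange system, then
`A[u,φ_u] − B` is a first integral. -/
theorem difference_noether (q J : ℕ)
    (L : ℤ → (Fin (J+1) → Fin q → ℝ) → ℝ)
    (hL : ∀ n, ContDiff ℝ 1 (L n))
    (u : ℤ → Fin q → ℝ)
    (φ : ℤ → (Fin q → ℝ) → (Fin q → ℝ))
    (B : ℤ → ℝ)
    (hsym : ∀ n : ℤ,
      ∑ j : Fin (J+1), ∑ α : Fin q,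
        φ (n + (j : ℕ)) (u (n + (j : ℕ))) α * pderivL q J L n (windowL q J u n) j α
      = B (n + 1) - B n)
    (hEL : ∀ (n : ℤ) (α : Fin q), ELexpr q J L u α n = 0) :
    (∀ n : ℤ,
      (bdryTerm q J L u (fun m => φ m (u m)) (n + 1) - B (n + 1))
        - (bdryTerm q J L u (fun m => φ m (u m)) n - B n) = 0)
    ∧ ∃ c : ℝ, ∀ n : ℤ, bdryTerm q J L u (fun m => φ m (u m)) n - B n = c := by

  classical
  set w : ℤ → Fin q → ℝ := fun m => φ m (u m) with hw
  have key : ∀ n : ℤ, bdryTerm q J L u w (n+1) - bdryTerm q J L u w n = B (n+1) - B n := by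
    intro n
    have hA : bdryTerm q J L u w (n+1) - bdryTerm q J L u w n
        = ∑ j : Fin (J+1),
            ((∑ α : Fin q, w (n + (j:ℕ)) α * pderivL q J L n (windowL q J u n) j α)
              - ∑ α : Fin q,
                  w n α * pderivL q J L (n - (j:ℕ)) (windowL q J u (n - (j:ℕ))) j α) := by
      unfold bdryTerm
      rw [← Finset.sum_sub_distrib]
      refine Finset.sum_congr rfl fun j _ => ?_
      set f : ℕ → ℝ := fun l => ∑ α : Fin q,
          w (n + (l:ℕ)) α *
            pderivL q J L (n + (l:ℕ) - (j:ℕ)) (windowL q J u (n + (l:ℕ) - (j:ℕ))) j α with hf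
      have h1 : (∑ l ∈ Finset.range (j:ℕ), ∑ α : Fin q,
            w (n + 1 + (l:ℕ)) α *
              pderivL q J L (n + 1 + (l:ℕ) - (j:ℕ)) (windowL q J u (n + 1 + (l:ℕ) - (j:ℕ))) j α)
          = ∑ l ∈ Finset.range (j:ℕ), f (l+1) := by
        refine Finset.sum_congr rfl fun l _ => ?_
        have hcast : n + 1 + (l:ℕ) = n + ((l+1 : ℕ) : ℤ) := by push_cast; ring
        simp only [hf, hcast]
      have h2 : (∑ l ∈ Finset.range (j:ℕ), ∑ α : Fin q,
            w (n + (l:ℕ)) α *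
              pderivL q J L (n + (l:ℕ) - (j:ℕ)) (windowL q J u (n + (l:ℕ) - (j:ℕ))) j α)
          = ∑ l ∈ Finset.range (j:ℕ), f l := rfl
      rw [h1, h2, ← Finset.sum_sub_distrib, Finset.sum_range_sub f (j:ℕ)]
      have e1 : n + ((j:ℕ):ℤ) - ((j:ℕ):ℤ) = n := by ring
      have e2 : n + ((0:ℕ):ℤ) = n := by norm_num
      simp only [hf, e1, e2]
    have hswap : (∑ j : Fin (J+1), ∑ α : Fin q,
          w n α * pderivL q J L (n - (j:ℕ)) (windowL q J u (n - (j:ℕ))) j α)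
        = ∑ α : Fin q, w n α * ELexpr q J L u α n := by
      rw [Finset.sum_comm]
      refine Finset.sum_congr rfl fun α _ => ?_
      rw [ELexpr, Finset.mul_sum]
    rw [hA, Finset.sum_sub_distrib, hswap]
    have h3 : (∑ α : Fin q, w n α * ELexpr q J L u α n) = 0 := by
      simp [hEL]
    rw [h3, sub_zero, ← hsym n]
  refine ⟨fun n => by have := key n; linarith, ?_⟩
  refine ⟨bdryTerm q J L u w 0 - B 0, fun n => ?_⟩
  have hconst : ∀ n : ℤ, bdryTerm q J L u w n - B n = bdryTerm q J L u w 0 - B 0 := by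
    intro m
    induction m using Int.induction_on with
    | zero => rfl
    | succ k ih => have := key (k:ℤ); push_cast at this ⊢; linarith
    | pred k ih =>
      have h0 := key (-(k:ℤ)-1)
      have he : -(k:ℤ)-1+1 = -(k:ℤ) := by ring
      rw [he] at h0
      push_cast at h0 ih ⊢; linarith
  exact hconst n
end

section
/- (General solution of the first invariantized Euler–Lagrange equation of the scaling-invariant Lagrangian.) Let κ : ℤ → ℝ satisfy κ(n) > 1 for all n ∈ ℤ. Then κ satisfies the difference equation (κ(n−1) − 1)^{3/2} − (κ(n) − 1)^{−3/2} = 0 for all n ∈ ℤ if and only if there exists a real constant k₁ > 0 such that κ(n) = 1 + k₁^{2·(−1)^n} for all n ∈ ℤ. -/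
lemma key_iff {a b : ℝ} (ha : 0 < a) (hb : 0 < b) :
    a ^ ((3 : ℝ) / 2) = b ^ (-(3 : ℝ) / 2) ↔ a = b⁻¹ := by
  constructor
  · intro h
    have h2 := congrArg (fun x : ℝ => x ^ ((2 : ℝ) / 3)) h
    beta_reduce at h2
    rw [← Real.rpow_mul ha.le, ← Real.rpow_mul hb.le] at h2
    norm_num at h2
    rwa [Real.rpow_neg_one] at h2
  · rintro rfl
    rw [← Real.rpow_neg_one b, ← Real.rpow_mul hb.le]
    norm_num

/-- General solution of the first invariantized Euler–Lagrange equation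
`(κ_{-1} − 1)^{3/2} − (κ − 1)^{−3/2} = 0` of the scaling-invariant Lagrangian, for `κ > 1`:
the solutions are exactly `κ(n) = 1 + k₁^{2(−1)^n}` with `k₁ > 0`. -/
theorem kappa_general_solution (κ : ℤ → ℝ) (hκ : ∀ n : ℤ, 1 < κ n) :
    (∀ n : ℤ, (κ (n - 1) - 1) ^ ((3 : ℝ) / 2) - (κ n - 1) ^ (-(3 : ℝ) / 2) = 0) ↔
      ∃ k₁ : ℝ, 0 < k₁ ∧ ∀ n : ℤ, κ n = 1 + k₁ ^ (2 * (-1 : ℝ) ^ n) := by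
  have hpos : ∀ n : ℤ, 0 < κ n - 1 := fun n => by linarith [hκ n]
  constructor
  · intro h
    have hrec : ∀ n : ℤ, κ n - 1 = (κ (n - 1) - 1)⁻¹ := by
      intro n
      have := sub_eq_zero.mp (h n)
      have := (key_iff (hpos (n - 1)) (hpos n)).mp this
      rw [this, inv_inv]
    set c : ℝ := κ 0 - 1 with hc
    refine ⟨c ^ ((1 : ℝ) / 2), Real.rpow_pos_of_pos (hpos 0) _, ?_⟩
    have hform : ∀ n : ℤ, κ n = 1 + c ^ ((-1 : ℝ) ^ n) := by
      intro n
      induction n using Int.induction_on with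
      | zero => simp [← hc]; linarith [hpos 0]
      | succ k ih =>
        have h1 : κ (k + 1) - 1 = (κ k - 1)⁻¹ := by
          have := hrec (k + 1); simpa using this
        have h2 : κ k - 1 = c ^ ((-1 : ℝ) ^ (k : ℤ)) := by linarith [ih]
        have : κ (k + 1) - 1 = c ^ (-((-1 : ℝ) ^ (k : ℤ))) := by
          rw [h1, h2, Real.rpow_neg (hpos 0).le]
        rw [show ((-1 : ℝ) ^ ((k : ℤ) + 1)) = -((-1 : ℝ) ^ (k : ℤ)) by
          rw [zpow_add_one₀ (by norm_num)]; ring]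
        linarith [this]
      | pred k ih =>
        have h1 : κ (-(k : ℤ)) - 1 = (κ (-(k : ℤ) - 1) - 1)⁻¹ := hrec _
        have h2 : κ (-(k : ℤ)) - 1 = c ^ ((-1 : ℝ) ^ (-(k : ℤ))) := by linarith [ih]
        have h3 : κ (-(k : ℤ) - 1) - 1 = (κ (-(k : ℤ)) - 1)⁻¹ := by
          rw [h1, inv_inv]
        have : κ (-(k : ℤ) - 1) - 1 = c ^ (-((-1 : ℝ) ^ (-(k : ℤ)))) := by
          rw [h3, h2, Real.rpow_neg (hpos 0).le]
        rw [show (-(k : ℤ) - 1) = (-((k : ℤ) + 1)) from by ring] at this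
        rw [show (-(k : ℤ) - 1) = (-((k : ℤ) + 1)) from by ring]
        rw [show ((-1 : ℝ) ^ (-((k : ℤ) + 1))) = -((-1 : ℝ) ^ (-(k : ℤ))) by
          rw [zpow_neg, zpow_neg, zpow_add_one₀ (by norm_num), mul_neg_one, inv_neg]]
        linarith [this]
    intro n
    rw [hform n, ← Real.rpow_mul (hpos 0).le]
    rw [← hc]
    ring_nf
  · rintro ⟨k₁, hk₁, hform⟩ n
    have hv : ∀ m : ℤ, κ m - 1 = k₁ ^ (2 * (-1 : ℝ) ^ m) := fun m => by
      rw [hform m]; ring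
    rw [sub_eq_zero]
    apply (key_iff (hpos (n - 1)) (hpos n)).mpr
    rw [hv, hv, ← Real.rpow_neg hk₁.le]
    congr 1
    rw [show (n - 1 : ℤ) = n + (-1) from by ring, zpow_add₀ (by norm_num : (-1:ℝ) ≠ 0)]
    simp
end

section
/- (General solution of the second invariantized Euler–Lagrange equation of the scaling-invariant Lagrangian.) Let k₁ > 0 be a real constant and let η : ℤ → ℝ. Then η satisfies the linear difference equation k₁^{3(−1)^{n+1}}·η(n) + (k₁^{3(−1)^n} − k₁^{(−1)^n})·η(n−1) − k₁^{5(−1)^{n+1}}·η(n−2) = 0 for all n ∈ ℤ if and only if there exist real constants k₂, k₃ such that η(n) = k₁^{3(−1)^n}·( k₂·( (n+1)·k₁^{(−1)^{n+1}} − n·k₁^{(−1)^n} ) + k₃·(−1)^n ) for all n ∈ ℤ. -/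
/-- The candidate general solution. -/
noncomputable def etaSol (k₁ k₂ k₃ : ℝ) (n : ℤ) : ℝ :=
  k₁ ^ (3 * (-1 : ℝ) ^ n) *
    (k₂ * (((n : ℝ) + 1) * k₁ ^ ((-1 : ℝ) ^ (n + 1)) - (n : ℝ) * k₁ ^ ((-1 : ℝ) ^ n))
      + k₃ * (-1 : ℝ) ^ n)

lemma neg_one_zpow_succ (n : ℤ) : (-1:ℝ)^(n+1) = -(-1:ℝ)^n := by
  rw [zpow_add₀ (by norm_num : (-1:ℝ) ≠ 0)]; simp

lemma etaSol_rec (k₁ : ℝ) (hk₁ : 0 < k₁) (k₂ k₃ : ℝ) (n : ℤ) :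
    k₁ ^ (3 * (-1 : ℝ) ^ (n + 1)) * etaSol k₁ k₂ k₃ n
      + (k₁ ^ (3 * (-1 : ℝ) ^ n) - k₁ ^ ((-1 : ℝ) ^ n)) * etaSol k₁ k₂ k₃ (n - 1)
      - k₁ ^ (5 * (-1 : ℝ) ^ (n + 1)) * etaSol k₁ k₂ k₃ (n - 2) = 0 := by
  have hne : k₁ ≠ 0 := ne_of_gt hk₁
  have h1 : (-1:ℝ)^(n-1) = -(-1:ℝ)^n := by
    rw [zpow_sub₀ (by norm_num : (-1:ℝ) ≠ 0)]; ring
  have h2 : (-1:ℝ)^(n-2) = (-1:ℝ)^n := by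
    rw [zpow_sub₀ (by norm_num : (-1:ℝ) ≠ 0)]; norm_num
  have h3 : (-1:ℝ)^(n-1+1) = (-1:ℝ)^n := by norm_num
  have h4 : (-1:ℝ)^(n-2+1) = -(-1:ℝ)^n := by
    rw [neg_one_zpow_succ, h2]
  unfold etaSol
  rw [neg_one_zpow_succ, h1, h2, h3, h4]
  push_cast
  rcases Int.even_or_odd n with he | ho
  · rw [he.neg_one_zpow]
    rw [show (3 * -1 : ℝ) = ((-3:ℤ):ℝ) by norm_num,
      show (3 * (1:ℝ)) = ((3:ℤ):ℝ) by norm_num,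
      show (5 * -1 : ℝ) = ((-5:ℤ):ℝ) by norm_num,
      show (-1 : ℝ) = ((-1:ℤ):ℝ) by norm_num,
      show (1 : ℝ) = ((1:ℤ):ℝ) by norm_num]
    simp only [Real.rpow_intCast]
    push_cast
    field_simp
    norm_cast
    push_cast
    ring
  · rw [ho.neg_one_zpow]
    rw [show (3 * -(-1) : ℝ) = ((3:ℤ):ℝ) by norm_num,
      show (3 * (-1:ℝ)) = ((-3:ℤ):ℝ) by norm_num,
      show (5 * -(-1) : ℝ) = ((5:ℤ):ℝ) by norm_num,
      show (-(-1) : ℝ) = ((1:ℤ):ℝ) by norm_num,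
      show (-1 : ℝ) = ((-1:ℤ):ℝ) by norm_num]
    simp only [Real.rpow_intCast]
    push_cast
    field_simp
    norm_cast
    push_cast
    ring

lemma step_up (k₁ : ℝ) (hk₁ : 0 < k₁) (k₂ k₃ : ℝ) (η : ℤ → ℝ)
    (h : ∀ n : ℤ,
        k₁ ^ (3 * (-1 : ℝ) ^ (n + 1)) * η n
          + (k₁ ^ (3 * (-1 : ℝ) ^ n) - k₁ ^ ((-1 : ℝ) ^ n)) * η (n - 1)
          - k₁ ^ (5 * (-1 : ℝ) ^ (n + 1)) * η (n - 2) = 0)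
    (n : ℤ) (h1 : η (n - 1) = etaSol k₁ k₂ k₃ (n - 1))
    (h2 : η (n - 2) = etaSol k₁ k₂ k₃ (n - 2)) :
    η n = etaSol k₁ k₂ k₃ n := by
  have hr := etaSol_rec k₁ hk₁ k₂ k₃ n
  have hh := h n
  rw [h1, h2] at hh
  have hc : k₁ ^ (3 * (-1:ℝ)^(n+1)) ≠ 0 := (Real.rpow_pos_of_pos hk₁ _).ne'
  apply mul_left_cancel₀ hc
  linarith

lemma step_down (k₁ : ℝ) (hk₁ : 0 < k₁) (k₂ k₃ : ℝ) (η : ℤ → ℝ)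
    (h : ∀ n : ℤ,
        k₁ ^ (3 * (-1 : ℝ) ^ (n + 1)) * η n
          + (k₁ ^ (3 * (-1 : ℝ) ^ n) - k₁ ^ ((-1 : ℝ) ^ n)) * η (n - 1)
          - k₁ ^ (5 * (-1 : ℝ) ^ (n + 1)) * η (n - 2) = 0)
    (n : ℤ) (h1 : η n = etaSol k₁ k₂ k₃ n)
    (h2 : η (n - 1) = etaSol k₁ k₂ k₃ (n - 1)) :
    η (n - 2) = etaSol k₁ k₂ k₃ (n - 2) := by
  have hr := etaSol_rec k₁ hk₁ k₂ k₃ n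
  have hh := h n
  rw [h1, h2] at hh
  have hc : k₁ ^ (5 * (-1:ℝ)^(n+1)) ≠ 0 := (Real.rpow_pos_of_pos hk₁ _).ne'
  apply mul_left_cancel₀ hc
  linarith

lemma base_zero (k₁ : ℝ) (hk₁ : 0 < k₁) (η : ℤ → ℝ) :
    η 0 = etaSol k₁ ((η 0 * k₁ ^ (-2:ℤ) + η (-1) * k₁ ^ (4:ℤ))/2)
      ((η 0 * k₁ ^ (-3:ℤ) - η (-1) * k₁ ^ (3:ℤ))/2) 0 := by
  have hne : k₁ ≠ 0 := ne_of_gt hk₁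
  unfold etaSol
  norm_num
  rw [show (-1:ℝ) = ((-1:ℤ):ℝ) by norm_num]
  simp only [Real.rpow_intCast]
  field_simp
  norm_cast
  push_cast
  ring

lemma base_neg_one (k₁ : ℝ) (hk₁ : 0 < k₁) (η : ℤ → ℝ) :
    η (-1) = etaSol k₁ ((η 0 * k₁ ^ (-2:ℤ) + η (-1) * k₁ ^ (4:ℤ))/2)
      ((η 0 * k₁ ^ (-3:ℤ) - η (-1) * k₁ ^ (3:ℤ))/2) (-1) := by
  have hne : k₁ ≠ 0 := ne_of_gt hk₁
  unfold etaSol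
  norm_num
  rw [show (-1:ℝ) = ((-1:ℤ):ℝ) by norm_num]
  simp only [Real.rpow_intCast]
  field_simp
  norm_cast
  push_cast
  ring

/-- General solution of the second invariantized Euler–Lagrange equation of the
scaling-invariant Lagrangian, after substituting `κ(n) = 1 + k₁^{2(−1)^n}`. -/
theorem eta_general_solution (k₁ : ℝ) (hk₁ : 0 < k₁) (η : ℤ → ℝ) :
    (∀ n : ℤ,
        k₁ ^ (3 * (-1 : ℝ) ^ (n + 1)) * η n
          + (k₁ ^ (3 * (-1 : ℝ) ^ n) - k₁ ^ ((-1 : ℝ) ^ n)) * η (n - 1)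
          - k₁ ^ (5 * (-1 : ℝ) ^ (n + 1)) * η (n - 2) = 0) ↔
      ∃ k₂ k₃ : ℝ, ∀ n : ℤ,
        η n = k₁ ^ (3 * (-1 : ℝ) ^ n) *
          (k₂ * (((n : ℝ) + 1) * k₁ ^ ((-1 : ℝ) ^ (n + 1)) - (n : ℝ) * k₁ ^ ((-1 : ℝ) ^ n))
            + k₃ * (-1 : ℝ) ^ n) := by
  constructor
  · intro h
    set k₂ : ℝ := (η 0 * k₁ ^ (-2:ℤ) + η (-1) * k₁ ^ (4:ℤ))/2 with hk2
    set k₃ : ℝ := (η 0 * k₁ ^ (-3:ℤ) - η (-1) * k₁ ^ (3:ℤ))/2 with hk3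
    refine ⟨k₂, k₃, ?_⟩
    have key : ∀ n : ℤ, η n = etaSol k₁ k₂ k₃ n ∧ η (n - 1) = etaSol k₁ k₂ k₃ (n - 1) := by
      intro n
      induction n using Int.induction_on with
      | zero =>
        constructor
        · exact base_zero k₁ hk₁ η
        · show η (0 - 1) = etaSol k₁ k₂ k₃ (0 - 1)
          norm_num
          exact base_neg_one k₁ hk₁ η
      | succ i ih =>
        have e1 : ((i:ℤ) + 1) - 1 = i := by ring
        have e2 : ((i:ℤ) + 1) - 2 = i - 1 := by ring
        constructor
        · apply step_up k₁ hk₁ k₂ k₃ η h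
          · rw [e1]; exact ih.1
          · rw [e2]; exact ih.2
        · rw [e1]; exact ih.1
      | pred i ih =>
        have e1 : (-(i:ℤ) - 1) - 1 = (-(i:ℤ)) - 2 := by ring
        have e2 : (-(i:ℤ)) - 1 = -(i:ℤ) - 1 := by ring
        constructor
        · exact ih.2
        · rw [e1]
          exact step_down k₁ hk₁ k₂ k₃ η h (-(i:ℤ)) ih.1 ih.2
    intro n
    exact (key n).1
  · rintro ⟨k₂, k₃, hη⟩
    have hη' : ∀ n : ℤ, η n = etaSol k₁ k₂ k₃ n := hη
    intro n
    rw [hη' n, hη' (n-1), hη' (n-2)]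
    exact etaSol_rec k₁ hk₁ k₂ k₃ n
end
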